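/- For all real t, the integral (1/(2π)³) ∫_{ℝ³} ln(1 - e^{-|p|²}) dp equals -ζ(5/2)/(8π^{3/2}), where ζ is the Riemann zeta function. -/

import Mathlib

open MeasureTheory Real

lemma integrable_rexp_neg_mul_sq_norm' {V : Type*} [NormedAddCommGroup V] [InnerProductSpace ℝ V]
    [FiniteDimensional ℝ V] [MeasurableSpace V] [BorelSpace V] {b : ℝ} (hb : 0 < b) :
    Integrable (fun v : V => rexp (-b * ‖v‖ ^ 2)) := by
  have h := (GaussianFourier.integrable_cexp_neg_mul_sq_norm_add (V := V) (b := (b : ℂ))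
    (by simpa using hb) 0 0).norm
  simp only [Complex.norm_exp, zero_mul, add_zero, ← Complex.ofReal_pow,
    ← Complex.ofReal_mul, ← Complex.ofReal_neg, Complex.ofReal_re] at h
  exact h

lemma pointwise (p : EuclideanSpace ℝ (Fin 3)) (hp : p ≠ 0) :
    Real.log (1 - Real.exp (-‖p‖ ^ 2))
      = ∑' n : ℕ, -(Real.exp (-((n : ℝ) + 1) * ‖p‖ ^ 2) / ((n : ℝ) + 1)) := by
  have hn : 0 < ‖p‖ ^ 2 := by
    have : 0 < ‖p‖ := norm_pos_iff.mpr hp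
    positivity
  set x := Real.exp (-‖p‖ ^ 2) with hx
  have hx1 : x < 1 := by
    rw [hx, Real.exp_lt_one_iff]; linarith
  have hx0 : 0 < x := Real.exp_pos _
  have h := (Real.hasSum_pow_div_log_of_abs_lt_one (x := x) (by rw [abs_of_pos hx0]; exact hx1)).neg
  rw [neg_neg] at h
  rw [← h.tsum_eq]
  congr 1
  funext n
  rw [hx, ← Real.exp_nat_mul]
  push_cast
  ring_nf

lemma hpow (n : ℕ) : π ^ ((3 : ℝ) / 2) / ((n : ℝ) + 1) ^ ((3 : ℝ) / 2) / ((n : ℝ) + 1)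
    = π ^ ((3 : ℝ) / 2) * (1 / ((n : ℝ) + 1) ^ ((5 : ℝ) / 2)) := by
  have hb : (0 : ℝ) < (n : ℝ) + 1 := by positivity
  rw [div_div, mul_one_div]
  congr 1
  nth_rewrite 2 [← Real.rpow_one ((n : ℝ) + 1)]
  rw [← Real.rpow_add hb]
  norm_num

lemma term_integral (n : ℕ) :
    ∫ p : EuclideanSpace ℝ (Fin 3), rexp (-((n : ℝ) + 1) * ‖p‖ ^ 2)
      = π ^ ((3 : ℝ) / 2) / ((n : ℝ) + 1) ^ ((3 : ℝ) / 2) := by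
  have hb : (0 : ℝ) < (n : ℝ) + 1 := by positivity
  rw [GaussianFourier.integral_rexp_neg_mul_sq_norm hb]
  rw [finrank_euclideanSpace_fin]
  rw [Real.div_rpow pi_pos.le hb.le]
  norm_num

lemma S_summable : Summable (fun n : ℕ => 1 / ((n : ℝ) + 1) ^ ((5 : ℝ) / 2)) := by
  have := (Real.summable_one_div_nat_rpow (p := (5 : ℝ) / 2)).mpr (by norm_num)
  have h2 := (summable_nat_add_iff 1).mpr this
  convert h2 using 2 with n
  push_cast
  · rfl
  · push_cast; ring_nf

lemma key_integral :
    ∫ p : EuclideanSpace ℝ (Fin 3), Real.log (1 - Real.exp (-‖p‖ ^ 2))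
      = -(π ^ ((3 : ℝ) / 2) * ∑' n : ℕ, 1 / ((n : ℝ) + 1) ^ ((5 : ℝ) / 2)) := by
  set F : ℕ → EuclideanSpace ℝ (Fin 3) → ℝ :=
    fun n p => -(Real.exp (-((n : ℝ) + 1) * ‖p‖ ^ 2) / ((n : ℝ) + 1)) with hF
  have hb : ∀ n : ℕ, (0 : ℝ) < (n : ℝ) + 1 := fun n => by positivity
  have hint : ∀ n : ℕ, Integrable (F n) := fun n =>
    ((integrable_rexp_neg_mul_sq_norm' (hb n)).div_const _).neg
  have hnorm : ∀ n : ℕ, (∫ p : EuclideanSpace ℝ (Fin 3), ‖F n p‖)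
      = π ^ ((3 : ℝ) / 2) * (1 / ((n : ℝ) + 1) ^ ((5 : ℝ) / 2)) := by
    intro n
    have : ∀ p : EuclideanSpace ℝ (Fin 3), ‖F n p‖
        = Real.exp (-((n : ℝ) + 1) * ‖p‖ ^ 2) / ((n : ℝ) + 1) := by
      intro p
      rw [hF]
      simp only [norm_neg, Real.norm_eq_abs]
      rw [abs_of_nonneg (by positivity)]
    simp_rw [this, integral_div, term_integral n]
    exact hpow n
  have hsum : Summable fun n : ℕ => ∫ p : EuclideanSpace ℝ (Fin 3), ‖F n p‖ := by
    refine Summable.congr (S_summable.mul_left (π ^ ((3 : ℝ) / 2))) ?_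
    intro n
    exact (hnorm n).symm
  have hae : (fun p : EuclideanSpace ℝ (Fin 3) => Real.log (1 - Real.exp (-‖p‖ ^ 2)))
      =ᵐ[volume] fun p => ∑' n : ℕ, F n p := by
    have h0 : ∀ᵐ p : EuclideanSpace ℝ (Fin 3), p ≠ 0 := by
      simp [ae_iff, measure_singleton]
    filter_upwards [h0] with p hp
    exact pointwise p hp
  rw [integral_congr_ae hae, ← integral_tsum_of_summable_integral_norm hint hsum]
  have : ∀ n : ℕ, (∫ p : EuclideanSpace ℝ (Fin 3), F n p)
      = -(π ^ ((3 : ℝ) / 2) * (1 / ((n : ℝ) + 1) ^ ((5 : ℝ) / 2))) := by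
    intro n
    rw [hF]
    simp only [integral_neg, integral_div, term_integral n]
    rw [hpow n]
  simp_rw [this]
  rw [tsum_neg, tsum_mul_left]

lemma zeta_val : riemannZeta (5 / 2)
    = ((∑' n : ℕ, 1 / ((n : ℝ) + 1) ^ ((5 : ℝ) / 2) : ℝ) : ℂ) := by
  rw [zeta_eq_tsum_one_div_nat_add_one_cpow (by norm_num)]
  rw [Complex.ofReal_tsum]
  congr 1
  funext n
  have hb : (0 : ℝ) ≤ (n : ℝ) + 1 := by positivity
  rw [Complex.ofReal_div, Complex.ofReal_cpow hb]
  push_cast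
  norm_num

theorem spin_wave_constant :
    ∀ _t : ℝ,
    (((1 / (2 * π) ^ 3 *
        ∫ p : EuclideanSpace ℝ (Fin 3), Real.log (1 - Real.exp (-‖p‖ ^ 2))) : ℝ) : ℂ)
      = - riemannZeta (5 / 2) / (8 * (π : ℂ) ^ ((3 : ℂ) / 2)) := by
  intro _t
  rw [key_integral, zeta_val]
  set S : ℝ := ∑' n : ℕ, 1 / ((n : ℝ) + 1) ^ ((5 : ℝ) / 2) with hS
  have hpi : ((π : ℂ) ^ ((3 : ℂ) / 2)) = ((π ^ ((3 : ℝ) / 2) : ℝ) : ℂ) := by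
    rw [Complex.ofReal_cpow pi_pos.le]
    push_cast
    norm_num
  rw [hpi]
  rw [← Complex.ofReal_neg, ← Complex.ofReal_ofNat, ← Complex.ofReal_mul, ← Complex.ofReal_div]
  rw [Complex.ofReal_inj]
  have h3 : π ^ ((3 : ℝ) / 2) * π ^ ((3 : ℝ) / 2) = π ^ (3 : ℕ) := by
    rw [← Real.rpow_natCast π 3, ← Real.rpow_add pi_pos]
    norm_num
  have hne : π ^ ((3 : ℝ) / 2) ≠ 0 := by positivity
  field_simp
  linear_combination (-8) * S * h3
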